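/- Hölder's defect formula lower bound: for positive reals 0 < a_m ≤ ... ≤ a₁, the geometric mean satisfies (Π a_i)^{1/m} ≥ ((Σ a_i)/m) · exp(−Var(a/a_m)/2), where Var(z) = (1/m)Σ(z_i − mean(z))² and a/a_m denotes coordinatewise division. -/

import Mathlib

/-- Empirical variance of a vector. -/
noncomputable def empVar {k : ℕ} (z : Fin k → ℝ) : ℝ :=
  (∑ i, (z i - (∑ j, z j) / k) ^ 2) / k


lemma keyDeriv {t : ℝ} (ht : 0 < t) {x : ℝ} (hx : 0 < x) :
    HasDerivAt (fun y => Real.log y - y / t + (y - t) ^ 2 / 2)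
      (1 / x - 1 / t + (x - t)) x := by
  have h1 : HasDerivAt (fun y : ℝ => Real.log y - y / t + (y - t) ^ 2 / 2)
      (x⁻¹ - 1 / t + (2 * (x - t) ^ 1 * 1) / 2) x := by
    exact ((Real.hasDerivAt_log hx.ne').sub ((hasDerivAt_id x).div_const t)).add
      ((((hasDerivAt_id x).sub_const t).pow 2).div_const 2)
  convert h1 using 1
  field_simp

lemma keyPt {t : ℝ} (ht : 1 ≤ t) {x : ℝ} (hx : 1 ≤ x) :
    Real.log t - 1 ≤ Real.log x - x / t + (x - t) ^ 2 / 2 := by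
  set f : ℝ → ℝ := fun y => Real.log y - y / t + (y - t) ^ 2 / 2 with hf
  have ht0 : (0:ℝ) < t := by linarith
  have hft : f t = Real.log t - 1 := by
    simp only [hf, sub_self]; rw [div_self ht0.ne']; ring
  have hderiv : ∀ y : ℝ, 0 < y → HasDerivAt f (1 / y - 1 / t + (y - t)) y :=
    fun y hy => keyDeriv ht0 hy
  rcases le_total x t with hxt | htx
  · -- antitone on [1, t]
    have hanti : AntitoneOn f (Set.Icc 1 t) := by
      apply antitoneOn_of_deriv_nonpos (convex_Icc 1 t)
      · intro y hy
        exact (hderiv y (by linarith [hy.1])).continuousAt.continuousWithinAt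
      · intro y hy
        rw [interior_Icc] at hy
        exact (hderiv y (by linarith [hy.1])).differentiableAt.differentiableWithinAt
      · intro y hy
        rw [interior_Icc] at hy
        have hy0 : (0:ℝ) < y := by linarith [hy.1]
        rw [(hderiv y hy0).deriv]
        have hyt : (0:ℝ) < t * y := by positivity
        have heq : 1 / y - 1 / t + (y - t) = (y - t) * (t * y - 1) / (t * y) := by
          field_simp; ring
        rw [heq]
        apply div_nonpos_of_nonpos_of_nonneg _ hyt.le
        apply mul_nonpos_of_nonpos_of_nonneg
        · linarith [hy.2]
        · nlinarith [hy.1, ht]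
    rw [← hft]
    exact hanti ⟨hx, hxt⟩ ⟨ht, le_refl t⟩ hxt
  · -- monotone on [t, ∞)
    have hmono : MonotoneOn f (Set.Ici t) := by
      apply monotoneOn_of_deriv_nonneg (convex_Ici t)
      · intro y hy
        exact (hderiv y (by simp at hy; linarith)).continuousAt.continuousWithinAt
      · intro y hy
        rw [interior_Ici] at hy
        exact (hderiv y (by simp at hy; linarith)).differentiableAt.differentiableWithinAt
      · intro y hy
        rw [interior_Ici] at hy
        simp only [Set.mem_Ioi] at hy
        have hy0 : (0:ℝ) < y := by linarith
        rw [(hderiv y hy0).deriv]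
        have hyt : (0:ℝ) < t * y := by positivity
        have heq : 1 / y - 1 / t + (y - t) = (y - t) * (t * y - 1) / (t * y) := by
          field_simp; ring
        rw [heq]
        apply div_nonneg _ hyt.le
        apply mul_nonneg (by linarith)
        nlinarith
    rw [← hft]
    exact hmono (Set.self_mem_Ici) htx htx

/-- Hölder defect lower bound: for positive reals a₁ ≥ ... ≥ a_m > 0,
(Π a_i)^{1/m} ≥ ((Σ a_i)/m) · exp(−Var(a/a_m)/2), where a_m is the smallest entry. -/
theorem stmt6 {m : ℕ} (hm : 0 < m) (a : Fin m → ℝ) (hpos : ∀ i, 0 < a i)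
    (hsorted : Antitone a) :
    ((∑ i, a i) / m) * Real.exp (-(empVar (fun i => a i / a ⟨m - 1, by omega⟩)) / 2) ≤
      (∏ i, a i) ^ ((1 : ℝ) / m) := by
  set j : Fin m := ⟨m - 1, by omega⟩ with hj
  set c : ℝ := a j with hc
  have hc0 : 0 < c := hpos j
  set b : Fin m → ℝ := fun i => a i / c with hb
  show (∑ i, a i) / m * Real.exp (-empVar b / 2) ≤ (∏ i, a i) ^ ((1 : ℝ) / m)
  have hb1 : ∀ i, 1 ≤ b i := by
    intro i
    have hij : i ≤ j := by
      rw [hj, Fin.le_def]; simp; omega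
    have := hsorted hij
    rw [hb]
    rw [le_div_iff₀ hc0]
    simpa using this
  have hai : ∀ i, a i = c * b i := by
    intro i; rw [hb]; field_simp
  clear_value b
  clear hb
  have hb0 : ∀ i, 0 < b i := fun i => lt_of_lt_of_le one_pos (hb1 i)
  have hmR : (0:ℝ) < m := by exact_mod_cast hm
  set μ : ℝ := (∑ i, b i) / m with hμdef
  have hμ1 : 1 ≤ μ := by
    rw [hμdef, le_div_iff₀ hmR]
    calc (1:ℝ) * m = ∑ _i : Fin m, (1:ℝ) := by simp
    _ ≤ ∑ i, b i := Finset.sum_le_sum fun i _ => hb1 i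
  have hμ0 : (0:ℝ) < μ := lt_of_lt_of_le one_pos hμ1
  have hsumb : ∑ i, b i = m * μ := by
    rw [hμdef]; field_simp
  clear_value μ
  -- key sum inequality
  have hkey : (m : ℝ) * Real.log μ - (∑ i, (b i - μ) ^ 2) / 2 ≤ ∑ i, Real.log (b i) := by
    have h1 : ∀ i : Fin m, Real.log μ - 1 ≤ Real.log (b i) - b i / μ + (b i - μ) ^ 2 / 2 :=
      fun i => keyPt hμ1 (hb1 i)
    have h2 : (m:ℝ) * (Real.log μ - 1) ≤
        ∑ i, (Real.log (b i) - b i / μ + (b i - μ) ^ 2 / 2) := by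
      calc (m:ℝ) * (Real.log μ - 1) = ∑ _i : Fin m, (Real.log μ - 1) := by simp [mul_comm]; ring
      _ ≤ _ := Finset.sum_le_sum fun i _ => h1 i
    have e : ∑ i, (Real.log (b i) - b i / μ + (b i - μ) ^ 2 / 2) =
        ∑ i, Real.log (b i) - (∑ i, b i) / μ + (∑ i, (b i - μ) ^ 2) / 2 := by
      rw [Finset.sum_div, Finset.sum_div, ← Finset.sum_sub_distrib, ← Finset.sum_add_distrib]
    rw [e, hsumb] at h2
    have hm' : (m:ℝ) * μ / μ = m := by field_simp
    rw [hm'] at h2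
    linarith
  -- rewrite empVar
  have hV : empVar b = (∑ i, (b i - μ) ^ 2) / m := by
    rw [empVar, hμdef]
  have hP : 0 < ∏ i, a i := Finset.prod_pos fun i _ => hpos i
  have hS : (∑ i, a i) / m = c * μ := by
    have h : ∑ i, a i = c * ∑ i, b i := by
      rw [Finset.mul_sum]; exact Finset.sum_congr rfl fun i _ => hai i
    rw [h, hsumb]
    field_simp
  have hRHS : (∏ i, a i) ^ ((1 : ℝ) / m) = Real.exp ((∑ i, Real.log (a i)) / m) := by
    rw [Real.rpow_def_of_pos hP, Real.log_prod (fun i _ => (hpos i).ne')]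
    congr 1
    ring
  have hLog : ∑ i, Real.log (a i) = m * Real.log c + ∑ i, Real.log (b i) := by
    have h : ∀ i : Fin m, Real.log (a i) = Real.log c + Real.log (b i) := by
      intro i; rw [hai i, Real.log_mul hc0.ne' (hb0 i).ne']
    rw [Finset.sum_congr rfl fun i _ => h i, Finset.sum_add_distrib]
    simp [mul_comm]
  rw [hRHS, hS, hV]
  have hLHS : c * μ * Real.exp (-((∑ i, (b i - μ) ^ 2) / m) / 2) =
      Real.exp (Real.log c + Real.log μ + -((∑ i, (b i - μ) ^ 2) / m) / 2) := by
    rw [Real.exp_add, Real.exp_add, Real.exp_log hc0, Real.exp_log hμ0]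
  rw [hLHS, Real.exp_le_exp, hLog, le_div_iff₀ hmR]
  have e2 : (Real.log c + Real.log μ + -((∑ i, (b i - μ) ^ 2) / m) / 2) * m =
      m * Real.log c + (m * Real.log μ - (∑ i, (b i - μ) ^ 2) / 2) := by
    field_simp
    ring
  rw [e2]
  linarith [hkey]
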